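/- For λ > −μ̃, the operator W_λ defined by W_λ(η,g) = (0, h) with h(a) = e^{−λa} Π(0,a)η + ∫_0^a e^{−λ(a−s)} Π(s,a) g(s) ds satisfies the norm bound ‖W_λ‖ ≤ 1/(λ + μ̃). -/

import Mathlib

open MeasureTheory
open scoped ENNReal

open Real Set Filter
lemma aux_exp_intOn {c : ℝ} (hc : 0 < c) (s : ℝ) :
    IntegrableOn (fun x : ℝ => Real.exp (-(c * (x - s)))) (Set.Ioi s) := by
  have h := (exp_neg_integrableOn_Ioi s hc).const_mul (Real.exp (c * s))
  refine (integrableOn_congr_fun (fun x _ => ?_) measurableSet_Ioi).2 h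
  rw [← Real.exp_add]; ring_nf

lemma aux_exp_integral {c : ℝ} (hc : 0 < c) (s : ℝ) :
    ∫ x in Set.Ioi s, Real.exp (-(c * (x - s))) = 1 / c := by
  have hderiv : ∀ x ∈ Set.Ici s, HasDerivAt (fun x : ℝ => -Real.exp (-(c * (x - s))) / c)
      (Real.exp (-(c * (x - s)))) x := by
    intro x _
    have h1 : HasDerivAt (fun x : ℝ => -(c * (x - s))) (-c) x := by
      simpa using (((hasDerivAt_id x).sub_const s).const_mul c).fun_neg
    have := (h1.exp.div_const c).fun_neg
    convert this using 1
    · rfl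
    · rfl
    · funext y; ring
    · field_simp
  have htend : Tendsto (fun x : ℝ => -Real.exp (-(c * (x - s))) / c) atTop (nhds 0) := by
    have h1 : Tendsto (fun x : ℝ => -(c * (x - s))) atTop atBot := by
      refine tendsto_neg_atTop_atBot.comp ?_
      exact (tendsto_atTop_add_const_right _ (-s) tendsto_id).const_mul_atTop hc
    have := ((Real.tendsto_exp_atBot.comp h1).neg).div_const c
    simpa using this
  have := integral_Ioi_of_hasDerivAt_of_tendsto' hderiv (aux_exp_intOn hc s) htend
  rw [this]; simp [Real.exp_zero]; ring

lemma aux_exp_lintegral {c : ℝ} (hc : 0 < c) (s : ℝ) :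
    ∫⁻ x in Set.Ioi s, ENNReal.ofReal (Real.exp (-(c * (x - s)))) = ENNReal.ofReal (1 / c) := by
  rw [← ofReal_integral_eq_lintegral_ofReal (aux_exp_intOn hc s)
    (ae_of_all _ fun x => (Real.exp_pos _).le), aux_exp_integral hc s]

lemma aux_exp_lintegral_Ici {c : ℝ} (hc : 0 < c) (s : ℝ) :
    ∫⁻ x in Set.Ici s, ENNReal.ofReal (Real.exp (-(c * (x - s)))) = ENNReal.ofReal (1 / c) := by
  rw [← aux_exp_lintegral hc s]
  exact setLIntegral_congr Ioi_ae_eq_Ici.symm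

/-- The Fubini/Tonelli part: bound for the double integral. -/
lemma aux_B {X : Type*} [NormedAddCommGroup X]
    {c : ℝ} (hc : 0 < c) {S : Set ℝ} (hSmeas : MeasurableSet S)
    (hmemS : ∀ a ∈ S, ∀ s : ℝ, 0 < s → s ≤ a → s ∈ S)
    {g : ℝ → X} (hgmeas : AEStronglyMeasurable g volume) (hgint : IntegrableOn g S) :
    (∫⁻ a in S, ∫⁻ s in Set.Ioc 0 a,
        ENNReal.ofReal (Real.exp (-(c * (a - s))) * ‖g s‖)) ≤
      ENNReal.ofReal (∫ s in S, ‖g s‖) * ENNReal.ofReal (1 / c) := by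
  set T : Set (ℝ × ℝ) := {p : ℝ × ℝ | p.1 ∈ S ∧ 0 < p.2 ∧ p.2 ≤ p.1} with hTdef
  have hTmeas : MeasurableSet T :=
    (measurable_fst hSmeas).inter
      ((measurableSet_lt measurable_const measurable_snd).inter
        (measurableSet_le measurable_snd measurable_fst))
  set Φ : ℝ → ℝ → ℝ≥0∞ := fun a s =>
    T.indicator (fun p : ℝ × ℝ =>
      ENNReal.ofReal (Real.exp (-(c * (p.1 - p.2)))) * ENNReal.ofReal ‖g p.2‖) (a, s) with hΦdef
  have hΦ_mem : ∀ a s : ℝ, (a, s) ∈ T →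
      Φ a s = ENNReal.ofReal (Real.exp (-(c * (a - s)))) * ENNReal.ofReal ‖g s‖ :=
    fun a s h => Set.indicator_of_mem h _
  have hΦ_not : ∀ a s : ℝ, (a, s) ∉ T → Φ a s = 0 :=
    fun a s h => Set.indicator_of_notMem h _
  have hΦmeas : AEMeasurable (Function.uncurry Φ) (volume.prod volume) := by
    have hg2 : AEMeasurable (fun s : ℝ => ENNReal.ofReal ‖g s‖) volume :=
      ENNReal.measurable_ofReal.comp_aemeasurable hgmeas.norm.aemeasurable
    have hg3 : AEMeasurable (fun p : ℝ × ℝ => ENNReal.ofReal ‖g p.2‖) (volume.prod volume) :=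
      hg2.comp_quasiMeasurePreserving Measure.quasiMeasurePreserving_snd
    have hexp : Measurable (fun p : ℝ × ℝ => ENNReal.ofReal (Real.exp (-(c * (p.1 - p.2))))) :=
      ENNReal.measurable_ofReal.comp
        (Real.continuous_exp.comp ((continuous_const.mul (continuous_fst.sub continuous_snd)).neg)).measurable
    exact ((hexp.aemeasurable.mul hg3).indicator hTmeas)
  have hB1 : (∫⁻ a in S, ∫⁻ s in Set.Ioc 0 a,
        ENNReal.ofReal (Real.exp (-(c * (a - s))) * ‖g s‖)) = ∫⁻ a, ∫⁻ s, Φ a s := by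
    rw [← lintegral_indicator hSmeas _]
    congr 1; funext a
    by_cases ha : a ∈ S
    · rw [Set.indicator_of_mem ha, ← lintegral_indicator measurableSet_Ioc _]
      congr 1; funext s
      by_cases hs : s ∈ Set.Ioc (0:ℝ) a
      · rw [Set.indicator_of_mem hs, hΦ_mem a s ⟨ha, hs.1, hs.2⟩]
        exact ENNReal.ofReal_mul (Real.exp_pos _).le
      · rw [Set.indicator_of_notMem hs,
          hΦ_not a s (fun (hmem : (a, s) ∈ T) => hs ⟨hmem.2.1, hmem.2.2⟩)]
    · rw [Set.indicator_of_notMem ha]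
      have hz : ∀ s, Φ a s = 0 := fun s =>
        hΦ_not a s (fun (hmem : (a, s) ∈ T) => ha hmem.1)
      simp [hz]
  have hswap : (∫⁻ a, ∫⁻ s, Φ a s) = ∫⁻ s, ∫⁻ a, Φ a s :=
    lintegral_lintegral_swap hΦmeas
  have hsb : ∀ s, (∫⁻ a, Φ a s) ≤
      S.indicator (fun s => ENNReal.ofReal ‖g s‖ * ENNReal.ofReal (1 / c)) s := by
    intro s
    by_cases hsS : s ∈ S
    · rw [Set.indicator_of_mem hsS]
      have hpoint : ∀ a, Φ a s ≤
          (Set.Ici s).indicator (fun a => ENNReal.ofReal (Real.exp (-(c * (a - s))))) a *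
            ENNReal.ofReal ‖g s‖ := by
        intro a
        by_cases hmem : (a, s) ∈ T
        · rw [hΦ_mem a s hmem, Set.indicator_of_mem (show a ∈ Set.Ici s from hmem.2.2)]
        · rw [hΦ_not a s hmem]; exact zero_le
      calc (∫⁻ a, Φ a s)
          ≤ ∫⁻ a, (Set.Ici s).indicator
              (fun a => ENNReal.ofReal (Real.exp (-(c * (a - s))))) a *
              ENNReal.ofReal ‖g s‖ := lintegral_mono hpoint
        _ = (∫⁻ a, (Set.Ici s).indicator
              (fun a => ENNReal.ofReal (Real.exp (-(c * (a - s))))) a) *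
              ENNReal.ofReal ‖g s‖ := by
            exact lintegral_mul_const _
              ((ENNReal.measurable_ofReal.comp
                (Real.continuous_exp.comp ((continuous_const.mul (continuous_id.sub continuous_const)).neg)).measurable).indicator
                measurableSet_Ici)
        _ = ENNReal.ofReal (1 / c) * ENNReal.ofReal ‖g s‖ := by
            rw [lintegral_indicator measurableSet_Ici _, aux_exp_lintegral_Ici hc s]
        _ = ENNReal.ofReal ‖g s‖ * ENNReal.ofReal (1 / c) := mul_comm _ _
    · rw [Set.indicator_of_notMem hsS]
      have hz : ∀ a, Φ a s = 0 := fun a =>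
        hΦ_not a s (fun (hmem : (a, s) ∈ T) => hsS (hmemS _ hmem.1 _ hmem.2.1 hmem.2.2))
      simp [hz]
  calc (∫⁻ a in S, ∫⁻ s in Set.Ioc 0 a,
        ENNReal.ofReal (Real.exp (-(c * (a - s))) * ‖g s‖))
      = ∫⁻ s, ∫⁻ a, Φ a s := by rw [hB1, hswap]
    _ ≤ ∫⁻ s, S.indicator (fun s => ENNReal.ofReal ‖g s‖ * ENNReal.ofReal (1 / c)) s :=
        lintegral_mono hsb
    _ = ∫⁻ s in S, ENNReal.ofReal ‖g s‖ * ENNReal.ofReal (1 / c) := by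
        rw [lintegral_indicator hSmeas _]
    _ = (∫⁻ s in S, ENNReal.ofReal ‖g s‖) * ENNReal.ofReal (1 / c) := by
        refine lintegral_mul_const'' _ ?_
        exact ENNReal.measurable_ofReal.comp_aemeasurable hgmeas.norm.aemeasurable.restrict
    _ = ENNReal.ofReal (∫ s in S, ‖g s‖) * ENNReal.ofReal (1 / c) := by
        rw [ofReal_integral_eq_lintegral_ofReal hgint.norm (ae_of_all _ fun s => norm_nonneg _)]

/-- Norm bound for the pseudoresolvent family: for `λ > -μ̃`,
`‖W_λ(η,g)‖_{𝒳₀} = ∫_0^â ‖h(a)‖ da ≤ (λ+μ̃)⁻¹ (‖η‖ + ∫_0^â ‖g(a)‖ da)`. -/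
theorem stmt_3 {X : Type*} [NormedAddCommGroup X] [NormedSpace ℝ X] [CompleteSpace X]
    (ahat : ℝ≥0∞) (μt : ℝ) (hμt : 0 < μt)
    (Pi : ℝ → ℝ → (X →L[ℝ] X))
    (hPi : ∀ τ a : ℝ, 0 ≤ τ → τ ≤ a → ENNReal.ofReal a < ahat →
      ‖Pi τ a‖ ≤ Real.exp (-(μt * (a - τ))))
    (hPicont : ∀ v : X, Continuous fun p : ℝ × ℝ => Pi p.1 p.2 v)
    (lam : ℝ) (hlam : -μt < lam)
    (η : X) (g : ℝ → X)
    (hgmeas : AEStronglyMeasurable g volume)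
    (hgint : IntegrableOn g {a : ℝ | 0 ≤ a ∧ ENNReal.ofReal a < ahat}) :
    (∫ a in {a : ℝ | 0 ≤ a ∧ ENNReal.ofReal a < ahat},
        ‖Real.exp (-(lam * a)) • Pi 0 a η +
          ∫ s in (0:ℝ)..a, Real.exp (-(lam * (a - s))) • Pi s a (g s)‖) ≤
      (1 / (lam + μt)) *
        (‖η‖ + ∫ a in {a : ℝ | 0 ≤ a ∧ ENNReal.ofReal a < ahat}, ‖g a‖) := by
  set c := lam + μt with hcdef
  have hc : 0 < c := by simp [hcdef]; linarith
  set S := {a : ℝ | 0 ≤ a ∧ ENNReal.ofReal a < ahat} with hSdef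
  have hSmeas : MeasurableSet S := by
    have : S = {a : ℝ | 0 ≤ a} ∩ (ENNReal.ofReal ⁻¹' (Set.Iio ahat)) := rfl
    rw [this]
    exact (measurableSet_le measurable_const measurable_id).inter
      (ENNReal.measurable_ofReal measurableSet_Iio)
  have hmemS : ∀ a ∈ S, ∀ s : ℝ, 0 ≤ s → s ≤ a → s ∈ S := by
    intro a ha s hs hsa
    exact ⟨hs, lt_of_le_of_lt (ENNReal.ofReal_le_ofReal hsa) ha.2⟩
  -- pointwise bound for a single smul term
  have hsmul : ∀ τ a : ℝ, 0 ≤ τ → τ ≤ a → ENNReal.ofReal a < ahat → ∀ v : X,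
      ‖Real.exp (-(lam * (a - τ))) • Pi τ a v‖ ≤ Real.exp (-(c * (a - τ))) * ‖v‖ := by
    intro τ a hτ hτa hah v
    rw [norm_smul, Real.norm_eq_abs, Real.abs_exp]
    calc Real.exp (-(lam * (a - τ))) * ‖Pi τ a v‖
        ≤ Real.exp (-(lam * (a - τ))) * (Real.exp (-(μt * (a - τ))) * ‖v‖) := by
          refine mul_le_mul_of_nonneg_left ?_ (Real.exp_pos _).le
          exact ((Pi τ a).le_opNorm v).trans
            (mul_le_mul_of_nonneg_right (hPi τ a hτ hτa hah) (norm_nonneg v))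
      _ = Real.exp (-(c * (a - τ))) * ‖v‖ := by
          rw [← mul_assoc, ← Real.exp_add]
          congr 2
          rw [hcdef]; ring
  -- key pointwise lintegral bound
  have key : ∀ a ∈ S,
      ENNReal.ofReal ‖Real.exp (-(lam * a)) • Pi 0 a η +
          ∫ s in (0:ℝ)..a, Real.exp (-(lam * (a - s))) • Pi s a (g s)‖ ≤
        ENNReal.ofReal (Real.exp (-(c * a)) * ‖η‖) +
          ∫⁻ s in Set.Ioc 0 a, ENNReal.ofReal (Real.exp (-(c * (a - s))) * ‖g s‖) := by
    intro a ha
    have hb1 : ‖Real.exp (-(lam * a)) • Pi 0 a η‖ ≤ Real.exp (-(c * a)) * ‖η‖ := by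
      simpa using hsmul 0 a le_rfl ha.1 ha.2 η
    by_cases hii : IntervalIntegrable
        (fun s => Real.exp (-(lam * (a - s))) • Pi s a (g s)) volume 0 a
    · have hIoc : Set.Ioc (0:ℝ) a ⊆ S := fun s hs => hmemS a ha s hs.1.le hs.2
      have hgi : IntegrableOn g (Set.Ioc 0 a) := hgint.mono_set hIoc
      have hφm : AEStronglyMeasurable (fun s => Real.exp (-(c * (a - s))) * ‖g s‖)
          (volume.restrict (Set.Ioc 0 a)) :=
        ((Real.continuous_exp.comp
            ((continuous_const.mul (continuous_const.sub continuous_id)).neg)).aestronglyMeasurable).mul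
          hgmeas.norm.restrict
      have hφi : IntegrableOn (fun s => Real.exp (-(c * (a - s))) * ‖g s‖) (Set.Ioc 0 a) := by
        refine Integrable.mono' hgi.norm hφm
          ((ae_restrict_iff' measurableSet_Ioc).2 (ae_of_all _ fun s hs => ?_))
        rw [Real.norm_eq_abs, abs_mul, Real.abs_exp, abs_norm]
        refine mul_le_of_le_one_left (norm_nonneg _) ?_
        rw [Real.exp_le_one_iff]
        have : 0 ≤ c * (a - s) := mul_nonneg hc.le (sub_nonneg.2 hs.2)
        linarith
      have hφii : IntervalIntegrable (fun s => Real.exp (-(c * (a - s))) * ‖g s‖) volume 0 a :=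
        (intervalIntegrable_iff_integrableOn_Ioc_of_le ha.1).2 hφi
      have hnn : ‖∫ s in (0:ℝ)..a, Real.exp (-(lam * (a - s))) • Pi s a (g s)‖ ≤
          ∫ s in (0:ℝ)..a, Real.exp (-(c * (a - s))) * ‖g s‖ := by
        refine (intervalIntegral.norm_integral_le_integral_norm ha.1).trans ?_
        exact intervalIntegral.integral_mono_on ha.1 hii.norm hφii
          (fun s hs => hsmul s a hs.1 hs.2 ha.2 (g s))
      have hInonneg : 0 ≤ ∫ s in (0:ℝ)..a, Real.exp (-(c * (a - s))) * ‖g s‖ :=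
        intervalIntegral.integral_nonneg ha.1 (fun s _ => by positivity)
      calc ENNReal.ofReal ‖Real.exp (-(lam * a)) • Pi 0 a η +
            ∫ s in (0:ℝ)..a, Real.exp (-(lam * (a - s))) • Pi s a (g s)‖
          ≤ ENNReal.ofReal (Real.exp (-(c * a)) * ‖η‖ +
              ∫ s in (0:ℝ)..a, Real.exp (-(c * (a - s))) * ‖g s‖) :=
            ENNReal.ofReal_le_ofReal ((norm_add_le _ _).trans (add_le_add hb1 hnn))
        _ = ENNReal.ofReal (Real.exp (-(c * a)) * ‖η‖) +
              ENNReal.ofReal (∫ s in (0:ℝ)..a, Real.exp (-(c * (a - s))) * ‖g s‖) :=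
            ENNReal.ofReal_add (by positivity) hInonneg
        _ = ENNReal.ofReal (Real.exp (-(c * a)) * ‖η‖) +
              ∫⁻ s in Set.Ioc 0 a, ENNReal.ofReal (Real.exp (-(c * (a - s))) * ‖g s‖) := by
            rw [intervalIntegral.integral_of_le ha.1,
              ofReal_integral_eq_lintegral_ofReal hφi (ae_of_all _ fun s => by positivity)]
    · rw [intervalIntegral.integral_undef hii, add_zero]
      exact (ENNReal.ofReal_le_ofReal hb1).trans le_self_add
  -- main argument
  by_cases hInt : Integrable (fun a => ‖Real.exp (-(lam * a)) • Pi 0 a η +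
      ∫ s in (0:ℝ)..a, Real.exp (-(lam * (a - s))) • Pi s a (g s)‖) (volume.restrict S)
  · rw [integral_eq_lintegral_of_nonneg_ae (ae_of_all _ fun a => norm_nonneg _)
      hInt.aestronglyMeasurable]
    refine ENNReal.toReal_le_of_le_ofReal
      (mul_nonneg (div_nonneg zero_le_one hc.le)
        (add_nonneg (norm_nonneg _) (integral_nonneg fun a => norm_nonneg _))) ?_
    have hA : (∫⁻ a in S, ENNReal.ofReal (Real.exp (-(c * a)) * ‖η‖)) ≤
        ENNReal.ofReal (1 / c) * ENNReal.ofReal ‖η‖ := by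
      have hsub : S ⊆ Set.Ici (0 : ℝ) := fun a ha => ha.1
      calc (∫⁻ a in S, ENNReal.ofReal (Real.exp (-(c * a)) * ‖η‖))
          ≤ ∫⁻ a in Set.Ici (0:ℝ), ENNReal.ofReal (Real.exp (-(c * a)) * ‖η‖) :=
            lintegral_mono' (Measure.restrict_mono hsub le_rfl) le_rfl
        _ = ∫⁻ a in Set.Ici (0:ℝ),
              ENNReal.ofReal (Real.exp (-(c * (a - 0)))) * ENNReal.ofReal ‖η‖ := by
            congr 1; funext a
            rw [ENNReal.ofReal_mul (Real.exp_pos _).le, sub_zero]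
        _ = (∫⁻ a in Set.Ici (0:ℝ), ENNReal.ofReal (Real.exp (-(c * (a - 0))))) *
              ENNReal.ofReal ‖η‖ :=
            lintegral_mul_const _ (ENNReal.measurable_ofReal.comp
              (Real.continuous_exp.comp
                ((continuous_const.mul (continuous_id.sub continuous_const)).neg)).measurable)
        _ = ENNReal.ofReal (1 / c) * ENNReal.ofReal ‖η‖ := by
            rw [aux_exp_lintegral_Ici hc 0]
    have hB : (∫⁻ a in S, ∫⁻ s in Set.Ioc 0 a,
          ENNReal.ofReal (Real.exp (-(c * (a - s))) * ‖g s‖)) ≤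
        ENNReal.ofReal (∫ s in S, ‖g s‖) * ENNReal.ofReal (1 / c) :=
      aux_B hc hSmeas (fun a ha s hs hsa => hmemS a ha s hs.le hsa) hgmeas hgint
    calc (∫⁻ a in S, ENNReal.ofReal ‖Real.exp (-(lam * a)) • Pi 0 a η +
            ∫ s in (0:ℝ)..a, Real.exp (-(lam * (a - s))) • Pi s a (g s)‖)
        ≤ ∫⁻ a in S, (ENNReal.ofReal (Real.exp (-(c * a)) * ‖η‖) +
            ∫⁻ s in Set.Ioc 0 a, ENNReal.ofReal (Real.exp (-(c * (a - s))) * ‖g s‖)) :=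
          lintegral_mono_ae ((ae_restrict_iff' hSmeas).2 (ae_of_all _ key))
      _ = (∫⁻ a in S, ENNReal.ofReal (Real.exp (-(c * a)) * ‖η‖)) +
            ∫⁻ a in S, ∫⁻ s in Set.Ioc 0 a,
              ENNReal.ofReal (Real.exp (-(c * (a - s))) * ‖g s‖) :=
          lintegral_add_left ((ENNReal.measurable_ofReal.comp
            ((Real.continuous_exp.comp
              ((continuous_const.mul continuous_id).neg)).mul continuous_const).measurable)) _
      _ ≤ ENNReal.ofReal (1 / c) * ENNReal.ofReal ‖η‖ +
            ENNReal.ofReal (∫ s in S, ‖g s‖) * ENNReal.ofReal (1 / c) := add_le_add hA hB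
      _ = ENNReal.ofReal (1 / c * (‖η‖ + ∫ s in S, ‖g s‖)) := by
          rw [← ENNReal.ofReal_mul (div_nonneg zero_le_one hc.le),
            ← ENNReal.ofReal_mul (integral_nonneg fun s => norm_nonneg _),
            ← ENNReal.ofReal_add (by positivity)
              (mul_nonneg (integral_nonneg fun s => norm_nonneg _)
                (div_nonneg zero_le_one hc.le))]
          congr 1; ring
  · rw [MeasureTheory.integral_undef hInt]
    exact mul_nonneg (div_nonneg zero_le_one hc.le)
      (add_nonneg (norm_nonneg _) (integral_nonneg fun a => norm_nonneg _))
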